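/- Fix integers ℓ ≥ 3, m ≥ 2, and 1 < a < ℓ ≤ b. Let V = [a] × [b] × [m]. Define D to be the set of all m-element subsets of V that are neither contained in a single row {x} × [b] × [m] nor in a single column [a] × {y} × [m]. Then the hypergraph (V, D) has chromatic number a; that is, every coloring of V avoiding monochromatic D-edges uses at least a colors, and some such coloring uses exactly a colors. -/

import Mathlib

/-- A coloring is proper for a mixed hypergraph `(C, D)` if every `C`-edge has two
vertices of the same color and every `D`-edge has two vertices of distinct colors. -/
def Proper {V : Type} (C D : Set (Finset V)) (c : V → ℕ) : Prop :=
  (∀ e ∈ C, ∃ u ∈ e, ∃ v ∈ e, u ≠ v ∧ c u = c v) ∧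
  (∀ e ∈ D, ∃ u ∈ e, ∃ v ∈ e, c u ≠ c v)

/-- A coloring uses exactly `s` colors. -/
def UsesExactly {V : Type} [Fintype V] [DecidableEq V] (c : V → ℕ) (s : ℕ) : Prop :=
  (Finset.univ.image c).card = s

/-- The `D`-edges of `H(ℓ,m,a,b)`: all `m`-subsets of `[a] × [b] × [m]` contained in
no single row and no single column. -/
def gridD (a b m : ℕ) : Set (Finset (Fin a × Fin b × Fin m)) :=
  {e | e.card = m ∧ (¬ ∃ x, ∀ p ∈ e, p.1 = x) ∧ (¬ ∃ y, ∀ p ∈ e, p.2.1 = y)}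

/-- The `C`-edges of `H(ℓ,m,a,b)`: all `ℓ`-subsets of `[a] × [b] × [m]` containing
at least two vertices from the same column. -/
def gridC (a b m ℓ : ℕ) : Set (Finset (Fin a × Fin b × Fin m)) :=
  {e | e.card = ℓ ∧ ∃ p ∈ e, ∃ q ∈ e, p ≠ q ∧ p.2.1 = q.2.1}

/-- A row-coloring: rows are monochromatic with pairwise distinct colors. -/
def IsRowColoring {a b m : ℕ} (c : Fin a × Fin b × Fin m → ℕ) : Prop :=
  ∀ p q : Fin a × Fin b × Fin m, c p = c q ↔ p.1 = q.1

/-- A column-coloring: columns are monochromatic with pairwise distinct colors. -/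
def IsColColoring {a b m : ℕ} (c : Fin a × Fin b × Fin m → ℕ) : Prop :=
  ∀ p q : Fin a × Fin b × Fin m, c p = c q ↔ p.2.1 = q.2.1
theorem stmt7 (ℓ m a b : ℕ) (hl : 3 ≤ ℓ) (hm : 2 ≤ m)
    (ha : 1 < a) (hal : a < ℓ) (hlb : ℓ ≤ b) :
    (∀ c : Fin a × Fin b × Fin m → ℕ,
        (∀ e ∈ gridD a b m, ∃ u ∈ e, ∃ v ∈ e, c u ≠ c v) →
        a ≤ (Finset.univ.image c).card) ∧
    (∃ c : Fin a × Fin b × Fin m → ℕ,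
        (∀ e ∈ gridD a b m, ∃ u ∈ e, ∃ v ∈ e, c u ≠ c v) ∧
        UsesExactly c a) := by
  have hb : 0 < b := by omega
  have hm0 : 0 < m := by omega
  have hab : a ≤ b := by omega
  constructor
  · intro c hc
    -- every color fiber has at most b*m elements
    have hfib : ∀ k : ℕ,
        (Finset.univ.filter (fun p : Fin a × Fin b × Fin m => c p = k)).card ≤ b * m := by
      intro k
      set S := Finset.univ.filter (fun p : Fin a × Fin b × Fin m => c p = k) with hSdef
      by_cases hrow : ∃ x, ∀ p ∈ S, p.1 = x
      · obtain ⟨x, hx⟩ := hrow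
        have h1 : S.card ≤ (Finset.univ : Finset (Fin b × Fin m)).card := by
          apply Finset.card_le_card_of_injOn (fun p => p.2)
          · intro p _; exact Finset.mem_univ _
          · intro p hp q hq hpq
            have hp1 := hx p hp
            have hq1 := hx q hq
            have : p.1 = q.1 := hp1.trans hq1.symm
            exact Prod.ext this hpq
        simpa [mul_comm] using h1
      by_cases hcol : ∃ y, ∀ p ∈ S, p.2.1 = y
      · obtain ⟨y, hy⟩ := hcol
        have h1 : S.card ≤ (Finset.univ : Finset (Fin a × Fin m)).card := by
          apply Finset.card_le_card_of_injOn (fun p => (p.1, p.2.2))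
          · intro p _; exact Finset.mem_univ _
          · intro p hp q hq hpq
            have hp1 := hy p hp
            have hq1 := hy q hq
            simp only [Prod.mk.injEq] at hpq
            have h2 : p.2 = q.2 := Prod.ext (hp1.trans hq1.symm) hpq.2
            exact Prod.ext hpq.1 h2
        have h2 : (Finset.univ : Finset (Fin a × Fin m)).card ≤ b * m := by
          simp only [Finset.card_univ, Fintype.card_prod, Fintype.card_fin]
          exact Nat.mul_le_mul_right m hab
        exact h1.trans h2
      -- otherwise S would contain a monochromatic D-edge unless small
      by_contra hcard
      push_neg at hcard
      have hmS : m ≤ S.card := le_trans (Nat.le_mul_of_pos_left m hb) (le_of_lt hcard)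
      have hSne : S.Nonempty := Finset.card_pos.mp (lt_of_lt_of_le hm0 hmS)
      obtain ⟨p0, hp0⟩ := hSne
      push_neg at hrow hcol
      obtain ⟨p, hpS, hp⟩ := hrow p0.1
      obtain ⟨r, hrS, hr⟩ := hcol p0.2.1
      -- find u v in S differing in both coordinates
      obtain ⟨u, huS, v, hvS, huv1, huv2⟩ :
          ∃ u ∈ S, ∃ v ∈ S, u.1 ≠ v.1 ∧ u.2.1 ≠ v.2.1 := by
        by_cases h1 : p.2.1 = p0.2.1
        · by_cases h2 : r.1 = p.1
          · exact ⟨r, hrS, p0, hp0, by rw [h2]; exact hp, hr⟩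
          · exact ⟨r, hrS, p, hpS, h2, by rw [h1]; exact hr⟩
        · exact ⟨p, hpS, p0, hp0, hp, h1⟩
      have huvne : u ≠ v := fun h => huv1 (by rw [h])
      have hpair : ({u, v} : Finset (Fin a × Fin b × Fin m)) ⊆ S := by
        intro w hw
        rcases Finset.mem_insert.mp hw with h | h
        · rwa [h]
        · rw [Finset.mem_singleton.mp h]; exact hvS
      have hpaircard : ({u, v} : Finset (Fin a × Fin b × Fin m)).card ≤ m := by
        have := Finset.card_insert_le u ({v} : Finset (Fin a × Fin b × Fin m))
        simp at this ⊢
        omega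
      obtain ⟨t, hpt, htS, htcard⟩ :=
        Finset.exists_subsuperset_card_eq hpair hpaircard hmS
      have hut : u ∈ t := hpt (Finset.mem_insert_self u {v})
      have hvt : v ∈ t := hpt (Finset.mem_insert_of_mem (Finset.mem_singleton_self v))
      have htD : t ∈ gridD a b m := by
        refine ⟨htcard, ?_, ?_⟩
        · rintro ⟨x, hx⟩
          exact huv1 ((hx u hut).trans (hx v hvt).symm)
        · rintro ⟨y, hy⟩
          exact huv2 ((hy u hut).trans (hy v hvt).symm)
      obtain ⟨u', hu', v', hv', hne⟩ := hc t htD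
      have h1 : c u' = k := (Finset.mem_filter.mp (htS hu')).2
      have h2 : c v' = k := (Finset.mem_filter.mp (htS hv')).2
      exact hne (h1.trans h2.symm)
    -- counting
    have hcount := Finset.card_eq_sum_card_image c (Finset.univ : Finset (Fin a × Fin b × Fin m))
    have hsum : ∑ k ∈ Finset.univ.image c,
        (Finset.univ.filter (fun p : Fin a × Fin b × Fin m => c p = k)).card
        ≤ (Finset.univ.image c).card * (b * m) := by
      calc ∑ k ∈ Finset.univ.image c,
          (Finset.univ.filter (fun p : Fin a × Fin b × Fin m => c p = k)).card
          ≤ (Finset.univ.image c).card • (b * m) :=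
            Finset.sum_le_card_nsmul _ _ _ (fun k _ => hfib k)
        _ = (Finset.univ.image c).card * (b * m) := smul_eq_mul ..
    have hcards : (Finset.univ : Finset (Fin a × Fin b × Fin m)).card = a * (b * m) := by
      simp [Fintype.card_prod, mul_assoc]
    have : a * (b * m) ≤ (Finset.univ.image c).card * (b * m) := by
      rw [← hcards, hcount]; exact hsum
    have hbm : 0 < b * m := Nat.mul_pos hb hm0
    exact Nat.le_of_mul_le_mul_right this hbm
  · refine ⟨fun p => (p.1 : ℕ), ?_, ?_⟩
    · intro e he
      obtain ⟨hcard, hrow, _⟩ := he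
      have hene : e.Nonempty := Finset.card_pos.mp (by omega)
      obtain ⟨p0, hp0⟩ := hene
      push_neg at hrow
      obtain ⟨q, hq, hqne⟩ := hrow p0.1
      exact ⟨q, hq, p0, hp0, fun h => hqne (Fin.val_injective h)⟩
    · unfold UsesExactly
      have himg : (Finset.univ.image (fun p : Fin a × Fin b × Fin m => (p.1 : ℕ)))
          = Finset.range a := by
        ext x
        simp only [Finset.mem_image, Finset.mem_univ, true_and, Finset.mem_range]
        constructor
        · rintro ⟨p, rfl⟩; exact p.1.isLt
        · intro hx
          exact ⟨(⟨x, hx⟩, ⟨0, hb⟩, ⟨0, hm0⟩), rfl⟩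
      rw [himg, Finset.card_range]
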